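/- Let a < b be reals, λ ∈ [0,1), μ ∈ (0,1), p = (λ + (1-λ)μ)/(1+λ), and let θ(t) denote the largest eigenvalue of the 2×2 matrix E^{ty/2} Q̂ E^{ty/2}, where Q̂ = λI + (1-λ)[(1-μ, μ); (1-μ, μ)] and E^{ty/2} = diag(e^{ta/2}, e^{tb/2}). Then θ(t) ≤ exp(t·((1-μ)a + μb) + (t²/2)·((1+λ)/(1-λ))·(b-a)²/4) for every t ∈ ℝ. -/

import Mathlib

open Real

-- weighted AM-GM
lemma my_amgm (lam v : ℝ) (h0 : 0 ≤ lam) :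
    (1 + lam) * Real.exp ((1 - lam) * v / (1 + lam)) ≤ Real.exp v + lam * Real.exp (-v) := by
  have h1p : (0:ℝ) < 1 + lam := by linarith
  set c := (1 - lam) * v / (1 + lam) with hc
  have hcc : (1 + lam) * c = (1 - lam) * v := by
    rw [hc]; field_simp
  have key0 : (1 + lam) ≤ Real.exp (v - c) + lam * Real.exp (-v - c) := by
    have h3 := Real.add_one_le_exp (v - c)
    have h4 := mul_le_mul_of_nonneg_left (Real.add_one_le_exp (-v - c)) h0
    nlinarith [h3, h4, hcc]
  calc (1 + lam) * Real.exp c ≤ (Real.exp (v - c) + lam * Real.exp (-v - c)) * Real.exp c :=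
        mul_le_mul_of_nonneg_right key0 (Real.exp_pos c).le
    _ = Real.exp v + lam * Real.exp (-v) := by
        rw [add_mul, mul_assoc, ← Real.exp_add, ← Real.exp_add]
        ring_nf

-- Hoeffding-type, w ≥ 0
lemma my_hoeff_aux (τ w : ℝ) (hw : 0 ≤ w) :
    Real.cosh w + τ * Real.sinh w ≤ Real.exp (τ * w + w ^ 2 / 2) := by
  set A : ℝ → ℝ := fun x => (τ + x - 1) * Real.exp (τ * x + x ^ 2 / 2 + x) + (1 - τ) with hA
  have hAderiv : ∀ x : ℝ, HasDerivAt A ((τ + x) ^ 2 * Real.exp (τ * x + x ^ 2 / 2 + x)) x := by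
    intro x
    have hinner : HasDerivAt (fun x : ℝ => τ * x + x ^ 2 / 2 + x) (τ + x + 1) x := by
      have h1 : HasDerivAt (fun x : ℝ => τ * x) (τ * 1) x := (hasDerivAt_id x).const_mul τ
      have h2 : HasDerivAt (fun x : ℝ => x ^ 2 / 2) ((2 : ℕ) * x ^ 1 / 2) x :=
        (hasDerivAt_pow 2 x).div_const 2
      have := (h1.add h2).add (hasDerivAt_id x)
      exact this.congr_deriv (by push_cast; ring)
    have h3 : HasDerivAt (fun x : ℝ => τ + x - 1) 1 x := by
      simpa using ((hasDerivAt_id x).const_add τ).sub_const 1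
    have h5 := (h3.mul hinner.exp).add_const (1 - τ)
    exact h5.congr_deriv (by ring)
  have hAmono : Monotone A := by
    apply monotone_of_deriv_nonneg
    · exact fun x => (hAderiv x).differentiableAt
    · intro x
      rw [(hAderiv x).deriv]
      positivity
  have hA0 : A 0 = 0 := by simp [hA]
  set B : ℝ → ℝ := fun x =>
    (Real.exp (τ * x + x ^ 2 / 2) - Real.cosh x - τ * Real.sinh x) * Real.exp (-x) with hB
  have hBderiv : ∀ x : ℝ, HasDerivAt B ((A x * Real.exp (-x)) * Real.exp (-x)) x := by
    intro x
    have hinner : HasDerivAt (fun x : ℝ => τ * x + x ^ 2 / 2) (τ + x) x := by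
      have h1 : HasDerivAt (fun x : ℝ => τ * x) (τ * 1) x := (hasDerivAt_id x).const_mul τ
      have h2 : HasDerivAt (fun x : ℝ => x ^ 2 / 2) ((2 : ℕ) * x ^ 1 / 2) x :=
        (hasDerivAt_pow 2 x).div_const 2
      exact (h1.add h2).congr_deriv (by push_cast; ring)
    have hF : HasDerivAt (fun x : ℝ => Real.exp (τ * x + x ^ 2 / 2) - Real.cosh x - τ * Real.sinh x)
        ((τ + x) * Real.exp (τ * x + x ^ 2 / 2) - Real.sinh x - τ * Real.cosh x) x := by
      have h4 := (hinner.exp.sub (Real.hasDerivAt_cosh x)).sub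
        ((Real.hasDerivAt_sinh x).const_mul τ)
      exact h4.congr_deriv (by ring)
    have hexpneg : HasDerivAt (fun x : ℝ => Real.exp (-x)) (-Real.exp (-x)) x := by
      have h6 := (hasDerivAt_neg x).exp
      convert h6 using 1; ring
    have hprod := hF.mul hexpneg
    refine hprod.congr_deriv ?_
    have e1 : Real.exp (τ * x + x ^ 2 / 2 + x) = Real.exp (τ * x + x ^ 2 / 2) * Real.exp x := by
      rw [← Real.exp_add]
    have e2 : Real.exp (-x) = (Real.exp x)⁻¹ := Real.exp_neg x
    rw [hA]
    simp only [Real.cosh_eq, Real.sinh_eq, e1, e2]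
    field_simp
    ring
  have hBmono : MonotoneOn B (Set.Ici (0:ℝ)) := by
    apply monotoneOn_of_deriv_nonneg (convex_Ici 0)
    · exact (Differentiable.continuous (fun x => (hBderiv x).differentiableAt)).continuousOn
    · exact fun x _ => (hBderiv x).differentiableAt.differentiableWithinAt
    · intro x hx
      rw [interior_Ici] at hx
      rw [(hBderiv x).deriv]
      have hAx : 0 ≤ A x := by
        rw [← hA0]; exact hAmono (le_of_lt hx)
      positivity
  have hB0 : B 0 = 0 := by simp [hB]
  have hBw : 0 ≤ B w := by
    rw [← hB0]
    exact hBmono (by simp) (by exact hw) hw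
  have := hBw
  rw [hB] at this
  nlinarith [this, Real.exp_pos (-w)]

lemma my_hoeff (τ w : ℝ) :
    Real.cosh w + τ * Real.sinh w ≤ Real.exp (τ * w + w ^ 2 / 2) := by
  rcases le_total 0 w with h | h
  · exact my_hoeff_aux τ w h
  · have h2 := my_hoeff_aux (-τ) (-w) (by linarith)
    rw [Real.cosh_neg, Real.sinh_neg] at h2
    have e : -τ * -w + (-w) ^ 2 / 2 = τ * w + w ^ 2 / 2 := by ring
    rw [e] at h2
    nlinarith [h2]

-- key inequality
lemma my_key (lam mu w : ℝ) (h0 : 0 ≤ lam) (h1 : lam < 1) :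
    ((lam + (1 - lam) * (1 - mu)) * Real.exp (-w) + (lam + (1 - lam) * mu) * Real.exp w) *
        Real.exp ((2 * mu - 1) * w + (1 + lam) / (1 - lam) * (w ^ 2 / 2))
      ≤ Real.exp ((2 * mu - 1) * w + (1 + lam) / (1 - lam) * (w ^ 2 / 2)) ^ 2 + lam := by
  have h1l : (0:ℝ) < 1 - lam := by linarith
  have h1p : (0:ℝ) < 1 + lam := by linarith
  set τ' := (1 - lam) * (2 * mu - 1) / (1 + lam) with hτ'
  set s := (1 + lam) / (1 - lam) * (w ^ 2 / 2) with hs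
  set vv := (2 * mu - 1) * w + s with hvv
  have hveq : (1 - lam) * vv / (1 + lam) = τ' * w + w ^ 2 / 2 := by
    rw [hvv, hs, hτ']; field_simp
  have hAm := my_amgm lam vv h0
  rw [hveq] at hAm
  have hH := my_hoeff τ' w
  have hcs : (lam + (1 - lam) * (1 - mu)) * Real.exp (-w) + (lam + (1 - lam) * mu) * Real.exp w
      = (1 + lam) * (Real.cosh w + τ' * Real.sinh w) := by
    rw [Real.cosh_eq, Real.sinh_eq, hτ']; field_simp; ring
  rw [hcs]
  have hc1 : (1 + lam) * (Real.cosh w + τ' * Real.sinh w)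
      ≤ Real.exp vv + lam * Real.exp (-vv) :=
    le_trans (mul_le_mul_of_nonneg_left hH h1p.le) hAm
  have hmul := mul_le_mul_of_nonneg_right hc1 (Real.exp_pos vv).le
  have hinv : Real.exp (-vv) * Real.exp vv = 1 := by
    rw [← Real.exp_add]; simp
  nlinarith [hmul, hinv]

set_option maxHeartbeats 1000000 in
theorem stmt_4 (a b lam mu t : ℝ) (hab : a < b) (hlam : lam ∈ Set.Ico (0:ℝ) 1)
    (hmu : mu ∈ Set.Ioo (0:ℝ) 1)
    (Q E : Matrix (Fin 2) (Fin 2) ℝ)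
    (hQ : Q = lam • (1 : Matrix (Fin 2) (Fin 2) ℝ) + (1 - lam) • !![1 - mu, mu; 1 - mu, mu])
    (hE : E = !![Real.exp (t * a / 2), 0; 0, Real.exp (t * b / 2)])
    (θ : ℝ) (v : Fin 2 → ℝ) (hv : v ≠ 0) (heig : (E * Q * E).mulVec v = θ • v) :
    θ ≤ Real.exp (t * ((1 - mu) * a + mu * b) +
      t ^ 2 / 2 * ((1 + lam) / (1 - lam)) * ((b - a) ^ 2 / 4)) := by
  obtain ⟨h0, h1⟩ := hlam
  obtain ⟨hmu0, hmu1⟩ := hmu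
  subst hQ hE
  set X := Real.exp (t * a / 2) with hX
  set Y := Real.exp (t * b / 2) with hY
  -- determinant vanishes
  have hdet0 : ((!![X, 0; 0, Y] * (lam • (1 : Matrix (Fin 2) (Fin 2) ℝ) +
      (1 - lam) • !![1 - mu, mu; 1 - mu, mu]) * !![X, 0; 0, Y]) - θ • 1).det = 0 := by
    rw [← Matrix.exists_mulVec_eq_zero_iff]
    refine ⟨v, hv, ?_⟩
    rw [Matrix.sub_mulVec, heig, Matrix.smul_mulVec, Matrix.one_mulVec, sub_self]
  have h3 : ((!![X, 0; 0, Y] * (lam • (1 : Matrix (Fin 2) (Fin 2) ℝ) +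
      (1 - lam) • !![1 - mu, mu; 1 - mu, mu]) * !![X, 0; 0, Y]) - θ • 1).det =
      ((lam + (1 - lam) * (1 - mu)) * X ^ 2 - θ) * ((lam + (1 - lam) * mu) * Y ^ 2 - θ) -
        ((1 - lam) * mu * (X * Y)) * ((1 - lam) * (1 - mu) * (X * Y)) := by
    rw [Matrix.det_fin_two]
    simp [Matrix.mul_apply, Fin.sum_univ_two, Matrix.one_fin_two]
    ring
  rw [h3] at hdet0
  have hroot : θ ^ 2 - ((lam + (1 - lam) * (1 - mu)) * X ^ 2 +
      (lam + (1 - lam) * mu) * Y ^ 2) * θ + lam * (X * Y) ^ 2 = 0 := by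
    linear_combination hdet0
  -- scalar setup
  set w := t * (b - a) / 2 with hw
  set EC := Real.exp (t * (a + b) / 2) with hEC
  set U := Real.exp ((2 * mu - 1) * w + (1 + lam) / (1 - lam) * (w ^ 2 / 2)) with hU
  have hXY : X * Y = EC := by
    rw [hX, hY, hEC, ← Real.exp_add]; congr 1; ring
  have hX2 : X ^ 2 = EC * Real.exp (-w) := by
    rw [hX, hEC, hw, pow_two, ← Real.exp_add, ← Real.exp_add]; congr 1; ring
  have hY2 : Y ^ 2 = EC * Real.exp w := by
    rw [hY, hEC, hw, pow_two, ← Real.exp_add, ← Real.exp_add]; congr 1; ring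
  have hgoal : Real.exp (t * ((1 - mu) * a + mu * b) +
      t ^ 2 / 2 * ((1 + lam) / (1 - lam)) * ((b - a) ^ 2 / 4)) = EC * U := by
    rw [hEC, hU, hw, ← Real.exp_add]; congr 1; ring
  rw [hgoal]
  rw [hXY, hX2, hY2] at hroot
  clear heig hv hdet0 h3 hgoal
  have hECpos : (0:ℝ) < EC := Real.exp_pos _
  have hUpos : (0:ℝ) < U := Real.exp_pos _
  -- q(θ̃) ≥ 0
  have hkey := my_key lam mu w h0 h1
  rw [← hU] at hkey
  have hq : 0 ≤ (EC * U) ^ 2 - ((lam + (1 - lam) * (1 - mu)) * (EC * Real.exp (-w)) +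
      (lam + (1 - lam) * mu) * (EC * Real.exp w)) * (EC * U) + lam * EC ^ 2 := by
    nlinarith [mul_le_mul_of_nonneg_left hkey (sq_nonneg EC)]
  -- θ̃² ≥ D
  have hU2 : lam ≤ U ^ 2 := by
    have hUU : U ^ 2 = Real.exp (2 * ((2 * mu - 1) * w + (1 + lam) / (1 - lam) * (w ^ 2 / 2))) := by
      rw [hU, pow_two, ← Real.exp_add]; congr 1; ring
    rcases eq_or_lt_of_le h0 with h | h
    · rw [← h]; exact (Real.exp_pos _).le.trans (le_of_eq hUU.symm) |>.trans (le_of_eq rfl)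
    · have hlog : Real.log lam ≤ lam - 1 := Real.log_le_sub_one_of_pos h
      have h1l : (0:ℝ) < 1 - lam := by linarith
      have h2Seq : 2 * ((1 + lam) / (1 - lam) * (w ^ 2 / 2)) = (1 + lam) * w ^ 2 / (1 - lam) := by
        field_simp
      have hmul : (lam - 1 - 2 * (2 * mu - 1) * w) * (1 - lam) ≤ (1 + lam) * w ^ 2 := by
        nlinarith [sq_nonneg (w + (2 * mu - 1) * (1 - lam)),
          mul_nonneg h0 (sq_nonneg w),
          mul_nonneg (mul_nonneg (by linarith : (0:ℝ) ≤ 1 - (2 * mu - 1))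
            (by linarith : (0:ℝ) ≤ 1 + (2 * mu - 1))) (sq_nonneg (1 - lam))]
      have hdiv : lam - 1 - 2 * (2 * mu - 1) * w ≤ (1 + lam) * w ^ 2 / (1 - lam) :=
        (le_div_iff₀ h1l).mpr hmul
      rw [← h2Seq] at hdiv
      have harg : lam - 1 ≤ 2 * ((2 * mu - 1) * w + (1 + lam) / (1 - lam) * (w ^ 2 / 2)) := by
        linarith
      calc lam = Real.exp (Real.log lam) := (Real.exp_log h).symm
        _ ≤ Real.exp (2 * ((2 * mu - 1) * w + (1 + lam) / (1 - lam) * (w ^ 2 / 2))) :=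
            Real.exp_le_exp.mpr (le_trans hlog harg)
        _ = U ^ 2 := hUU.symm
  have hD2 : lam * EC ^ 2 ≤ (EC * U) ^ 2 := by
    nlinarith [mul_le_mul_of_nonneg_left hU2 (sq_nonneg EC)]
  -- root argument
  by_contra hcon
  push_neg at hcon
  have huPos : (0:ℝ) < EC * U := mul_pos hECpos hUpos
  have hθpos : (0:ℝ) < θ := lt_trans huPos hcon
  set T := (lam + (1 - lam) * (1 - mu)) * (EC * Real.exp (-w)) +
      (lam + (1 - lam) * mu) * (EC * Real.exp w) with hT
  set u := EC * U with hu
  have h5 : 0 ≤ θ * (u ^ 2 - T * u + lam * EC ^ 2) := mul_nonneg hθpos.le hq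
  have h6 : u * (θ ^ 2 - T * θ + lam * EC ^ 2) = 0 := by rw [hroot, mul_zero]
  have h7 : 0 ≤ (θ - u) * (lam * EC ^ 2 - θ * u) := by nlinarith [h5, h6]
  have h9 : 0 ≤ (θ - u) * (u ^ 2 - lam * EC ^ 2) :=
    mul_nonneg (by linarith) (by linarith)
  nlinarith [h7, h9, mul_pos huPos (mul_pos (sub_pos.2 hcon) (sub_pos.2 hcon))]
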